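/- For Δ, α ∈ ℂ, the span of vectors v_{(n)}, n ∈ ℤ, with the action L_m v_{(n)} = ((Δ-1)(m+1) - n) v_{(m+n)} + α v_{(m+n+1)} defines a representation of the centerless Virasoro algebra, i.e. [L_m, L_k] v_{(n)} = (m-k) L_{m+k} v_{(n)} for all m, k, n ∈ ℤ. -/

import Mathlib

/- `V` is the ℂ-vector space with basis `{v_{(n)}}_{n ∈ ℤ}`, realized as `ℤ →₀ ℂ`. -/

/-- The operator `L_m` acting by
`L_m v_{(n)} = ((Δ-1)(m+1) - n) v_{(m+n)} + α v_{(m+n+1)}`. -/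
noncomputable def lop (Δ α : ℂ) (m : ℤ) : (ℤ →₀ ℂ) →ₗ[ℂ] (ℤ →₀ ℂ) :=
  Finsupp.lsum ℂ fun n : ℤ =>
    LinearMap.toSpanSingleton ℂ (ℤ →₀ ℂ)
      (((Δ - 1) * ((m : ℂ) + 1) - (n : ℂ)) • Finsupp.single (m + n) (1 : ℂ)
        + α • Finsupp.single (m + n + 1) (1 : ℂ))

lemma lop_single (Δ α : ℂ) (m n : ℤ) (c : ℂ) :
    lop Δ α m (Finsupp.single n c)
      = c • (((Δ - 1) * ((m : ℂ) + 1) - (n : ℂ)) • Finsupp.single (m + n) (1 : ℂ)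
        + α • Finsupp.single (m + n + 1) (1 : ℂ)) := by
  rw [lop, Finsupp.lsum_single, LinearMap.toSpanSingleton_apply]

/-- The operators `L_m` define a representation of the centerless Virasoro algebra:
`[L_m, L_k] = (m - k) L_{m+k}`. -/
theorem lop_virasoro_rep (Δ α : ℂ) (m k : ℤ) (f : ℤ →₀ ℂ) :
    lop Δ α m (lop Δ α k f) - lop Δ α k (lop Δ α m f)
      = ((m : ℂ) - (k : ℂ)) • lop Δ α (m + k) f := by
  induction f using Finsupp.induction_linear with
  | zero => simp
  | add f g hf hg =>
      simp only [map_add, smul_add] at *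
      rw [← hf, ← hg]; abel
  | single n c =>
      simp only [lop_single, smul_add, smul_smul, map_add, map_smul]
      simp only [show m + (k + n) = m + k + n from by ring,
        show k + (m + n) = m + k + n from by ring,
        show m + (k + n + 1) = m + k + n + 1 from by ring,
        show k + (m + n + 1) = m + k + n + 1 from by ring,
        show m + (k + n) + 1 = m + k + n + 1 from by ring,
        show k + (m + n) + 1 = m + k + n + 1 from by ring,
        show m + (k + n + 1) + 1 = m + k + n + 2 from by ring,
        show k + (m + n + 1) + 1 = m + k + n + 2 from by ring]
      push_cast
      module
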